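/- Let C be an orientation of a cycle of odd length that is not a directed cycle (i.e., not all arcs consistently oriented). Then C admits a decomposition into a 2-bounded directed linear forest and a directed matching. -/

import Mathlib

open Finset
open Fin.NatCast

/-- Number of arcs of `F` entering `v` (in-degree). -/
def inDeg {V : Type*} [DecidableEq V] (F : Finset (V × V)) (v : V) : ℕ :=
  (F.filter (fun a => a.2 = v)).card

/-- Number of arcs of `F` leaving `v` (out-degree). -/
def outDeg {V : Type*} [DecidableEq V] (F : Finset (V × V)) (v : V) : ℕ :=
  (F.filter (fun a => a.1 = v)).card

/-- A directed matching: every vertex is incident to at most one arc. -/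
def IsDirectedMatching {V : Type*} [DecidableEq V] (F : Finset (V × V)) : Prop :=
  ∀ v, inDeg F v + outDeg F v ≤ 1

/-- A directed linear forest: in- and out-degrees at most one and no directed cycle. -/
def IsDLF {V : Type*} [DecidableEq V] (F : Finset (V × V)) : Prop :=
  (∀ v, inDeg F v ≤ 1) ∧ (∀ v, outDeg F v ≤ 1) ∧
    ∀ v : V, ¬ Relation.TransGen (fun u w => (u, w) ∈ F) v v

/-- `F` contains a directed walk with `n` arcs. -/
def HasWalkOfLength {V : Type*} (F : Finset (V × V)) (n : ℕ) : Prop :=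
  ∃ w : ℕ → V, ∀ i < n, (w i, w (i + 1)) ∈ F

/-- A `k`-bounded directed linear forest: each component path has at most `k` arcs. -/
def IsBoundedDLF {V : Type*} [DecidableEq V] (F : Finset (V × V)) (k : ℕ) : Prop :=
  IsDLF F ∧ ¬ HasWalkOfLength F (k + 1)

/-- Two arcs conflict if they share a vertex which is not the tail of both of them. -/
def ArcConflict {V : Type*} (a b : V × V) : Prop :=
  ∃ v, (v = a.1 ∨ v = a.2) ∧ (v = b.1 ∨ v = b.2) ∧ ¬(v = a.1 ∧ v = b.1)

/-- An out-galaxy: a vertex-disjoint union of out-stars, i.e. no two distinct arcs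
share a vertex that is not the tail of both. -/
def IsOutGalaxy {V : Type*} (F : Finset (V × V)) : Prop :=
  ∀ a ∈ F, ∀ b ∈ F, a ≠ b → ¬ ArcConflict a b

/-- A `k`-bounded out-galaxy: each out-star has at most `k` arcs. -/
def IsBoundedOutGalaxy {V : Type*} [DecidableEq V] (F : Finset (V × V)) (k : ℕ) : Prop :=
  IsOutGalaxy F ∧ ∀ v, outDeg F v ≤ k


namespace Stmt3Aux

variable (r : ℕ) [NeZero r] (o : Fin r → Bool)

/-- periodic orientation sequence -/
def bb (n : ℕ) : Bool := o (n : Fin r)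

/-- change boundary between arcs `n` and `n+1` -/
def chg (n : ℕ) : Prop := bb r o n ≠ bb r o (n + 1)

instance : DecidablePred (chg r o) := fun n => by unfold chg; infer_instance

variable {r o}

lemma bb_add_r (n : ℕ) : bb r o (n + r) = bb r o n := by
  unfold bb
  congr 1
  push_cast
  simp [Fin.natCast_self]

lemma bb_add_mul (n k : ℕ) : bb r o (n + k * r) = bb r o n := by
  induction k with
  | zero => simp
  | succ k ih => rw [Nat.succ_mul, ← Nat.add_assoc, bb_add_r, ih]

lemma chg_add_r (n : ℕ) : chg r o (n + r) ↔ chg r o n := by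
  unfold chg
  rw [show n + r + 1 = (n+1) + r by ring, bb_add_r, bb_add_r]

lemma chg_add_mul (n k : ℕ) : chg r o (n + k * r) ↔ chg r o n := by
  unfold chg
  rw [show n + k * r + 1 = (n+1) + k * r by ring, bb_add_mul, bb_add_mul]

variable (H : ∃ m, chg r o m)
include H

lemma exists_chg_ge (n : ℕ) : ∃ t, chg r o (n + t) := by
  obtain ⟨m, hm⟩ := id H
  have hr1 : 1 ≤ r := Nat.one_le_iff_ne_zero.mpr (NeZero.ne r)
  refine ⟨m + n * r - n, ?_⟩
  have h1 : n ≤ n * r := Nat.le_mul_of_pos_right n hr1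
  have : n + (m + n * r - n) = m + n * r := by omega
  rw [this, chg_add_mul]
  exact hm

lemma exists_chg_window (n : ℕ) : ∃ t, chg r o (n + r - 1 - t) := by
  obtain ⟨m, hm⟩ := id H
  have hr1 : 1 ≤ r := Nat.one_le_iff_ne_zero.mpr (NeZero.ne r)
  have hm' : chg r o (m % r) := by
    have := chg_add_mul (o := o) (m % r) (m / r)
    rw [Nat.mod_add_div'] at this
    exact this.mp hm
  have hmr : m % r < r := Nat.mod_lt _ hr1
  refine ⟨n + r - 1 - (m % r), ?_⟩
  have : n + r - 1 - (n + r - 1 - (m % r)) = m % r := by omega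
  rw [this]; exact hm'

/-- distance forward to next change -/
def vd (n : ℕ) : ℕ := Nat.find (exists_chg_ge H n)

/-- distance backward to previous change (block start offset) -/
def ud (n : ℕ) : ℕ := Nat.find (exists_chg_window H n)

lemma vd_spec (n : ℕ) : chg r o (n + vd H n) := Nat.find_spec (exists_chg_ge H n)
lemma vd_min {n t : ℕ} (h : t < vd H n) : ¬ chg r o (n + t) := Nat.find_min (exists_chg_ge H n) h
lemma vd_min' {n t : ℕ} (h : chg r o (n + t)) : vd H n ≤ t := Nat.find_min' (exists_chg_ge H n) h

lemma ud_spec (n : ℕ) : chg r o (n + r - 1 - ud H n) := Nat.find_spec (exists_chg_window H n)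
lemma ud_min {n t : ℕ} (h : t < ud H n) : ¬ chg r o (n + r - 1 - t) := Nat.find_min (exists_chg_window H n) h
lemma ud_min' {n t : ℕ} (h : chg r o (n + r - 1 - t)) : ud H n ≤ t := Nat.find_min' (exists_chg_window H n) h

lemma ud_lt (n : ℕ) : ud H n < r := by
  obtain ⟨m, hm⟩ := id H
  have hr1 : 1 ≤ r := Nat.one_le_iff_ne_zero.mpr (NeZero.ne r)
  have hm' : chg r o (m % r) := by
    have := chg_add_mul (o := o) (m % r) (m / r)
    rw [Nat.mod_add_div'] at this
    exact this.mp hm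
  have hmr : m % r < r := Nat.mod_lt _ hr1
  -- there is a change in the window [n, n+r-1]
  set p := m % r + (n + r - 1 - m % r) / r * r with hp
  have h4 := Nat.mod_lt (n + r - 1 - m % r) hr1
  have h5 := Nat.div_add_mod (n + r - 1 - m % r) r
  set t := (n + r - 1 - m % r) / r * r with ht
  rw [Nat.mul_comm] at h5
  have hple : p ≤ n + r - 1 := by omega
  have hgap : n + r - 1 - p < r := by omega
  have hchp : chg r o p := by
    exact (chg_add_mul (o := o) (m % r) ((n + r - 1 - m % r) / r)).mpr hm'
  have : ud H n ≤ n + r - 1 - p := by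
    apply ud_min'
    have : n + r - 1 - (n + r - 1 - p) = p := by omega
    rw [this]; exact hchp
  omega

lemma chg_iff_vd_eq_zero (n : ℕ) : chg r o n ↔ vd H n = 0 := by
  constructor
  · intro h; have := vd_min' H (t := 0) (by simpa using h); omega
  · intro h; have := vd_spec H n; rw [h] at this; simpa using this

lemma vd_add_r (n : ℕ) : vd H (n + r) = vd H n := by
  apply le_antisymm
  · apply vd_min'
    rw [show n + r + vd H n = (n + vd H n) + r by ring, chg_add_r]
    exact vd_spec H n
  · apply vd_min'
    have := vd_spec H (n + r)
    rw [show n + r + vd H (n+r) = (n + vd H (n+r)) + r by ring, chg_add_r] at this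
    exact this

lemma ud_add_r (n : ℕ) : ud H (n + r) = ud H n := by
  have h1 := ud_lt H n
  have h2 := ud_lt H (n + r)
  apply le_antisymm
  · apply ud_min'
    have := ud_spec H n
    have e : n + r + r - 1 - ud H n = (n + r - 1 - ud H n) + r := by omega
    rw [e, chg_add_r]
    exact this
  · apply ud_min'
    have := ud_spec H (n + r)
    have e : n + r + r - 1 - ud H (n + r) = (n + r - 1 - ud H (n+r)) + r := by omega
    rw [e, chg_add_r] at this
    exact this

/-- length of the block containing arc `n` -/
def Ld (n : ℕ) : ℕ := ud H n + vd H n + 1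

/-- a canonical representative (≡ block start mod r, shifted up by 2r) -/
def Qd (n : ℕ) : ℕ := n + 2 * r - ud H n

lemma Ld_add_r (n : ℕ) : Ld H (n + r) = Ld H n := by
  unfold Ld; rw [vd_add_r, ud_add_r]

lemma Ld_add_mul (n k : ℕ) : Ld H (n + k * r) = Ld H n := by
  induction k with
  | zero => simp
  | succ k ih => rw [Nat.succ_mul, ← Nat.add_assoc, Ld_add_r, ih]

lemma Qd_ge (n : ℕ) : n + r + 1 ≤ Qd H n := by
  have := ud_lt H n; unfold Qd; omega

variable (H2 : ∃ m, 2 ≤ Ld H m)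
include H2

lemma exists_L2_window (n : ℕ) : ∃ s, 2 ≤ Ld H (Qd H n - 1 - s) := by
  obtain ⟨m, hm⟩ := id H2
  have hr1 : 1 ≤ r := Nat.one_le_iff_ne_zero.mpr (NeZero.ne r)
  have hm' : 2 ≤ Ld H (m % r) := by
    have := Ld_add_mul H (m % r) (m / r)
    rw [Nat.mod_add_div'] at this
    rw [← this]; exact hm
  have hmr : m % r < r := Nat.mod_lt _ hr1
  have hQ := Qd_ge H n
  refine ⟨Qd H n - 1 - (m % r), ?_⟩
  have e : Qd H n - 1 - (Qd H n - 1 - (m % r)) = m % r := by omega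
  rw [e]; exact hm'

/-- (number of length-1 blocks walking back from block start to the previous
long block) -/
def Wm (n : ℕ) : ℕ := Nat.find (exists_L2_window H H2 n)

/-- length of the nearest previous long block -/
def based (n : ℕ) : ℕ := Ld H (Qd H n - 1 - Wm H H2 n)

/-- entry state of the block of `n` : `True` = first arc is selected -/
def aS (n : ℕ) : Prop := (based H H2 n = 2) ↔ (Wm H H2 n % 2 = 0)

lemma Wm_spec (n : ℕ) : 2 ≤ Ld H (Qd H n - 1 - Wm H H2 n) :=
  Nat.find_spec (exists_L2_window H H2 n)
lemma Wm_min {n t : ℕ} (h : t < Wm H H2 n) : ¬ 2 ≤ Ld H (Qd H n - 1 - t) :=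
  Nat.find_min (exists_L2_window H H2 n) h
lemma Wm_min' {n t : ℕ} (h : 2 ≤ Ld H (Qd H n - 1 - t)) : Wm H H2 n ≤ t :=
  Nat.find_min' (exists_L2_window H H2 n) h

lemma Wm_lt (n : ℕ) : Wm H H2 n < r := by
  obtain ⟨m, hm⟩ := id H2
  have hr1 : 1 ≤ r := Nat.one_le_iff_ne_zero.mpr (NeZero.ne r)
  have hQ := Qd_ge H n
  obtain ⟨m0, hm0le, hm0gap, hm0⟩ :
      ∃ m0, m0 ≤ Qd H n - 1 ∧ Qd H n - 1 - m0 < r ∧ 2 ≤ Ld H m0 := by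
    have hm' : 2 ≤ Ld H (m % r) := by
      have := Ld_add_mul H (m % r) (m / r)
      rw [Nat.mod_add_div'] at this
      rw [← this]; exact hm
    have hmr : m % r < r := Nat.mod_lt _ hr1
    have h5 := Nat.div_add_mod (Qd H n - 1 - m % r) r
    have h4 := Nat.mod_lt (Qd H n - 1 - m % r) hr1
    refine ⟨m % r + (Qd H n - 1 - m % r) / r * r, ?_, ?_, ?_⟩
    · set t := (Qd H n - 1 - m % r) / r * r with ht
      rw [Nat.mul_comm] at h5
      omega
    · set t := (Qd H n - 1 - m % r) / r * r with ht
      rw [Nat.mul_comm] at h5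
      omega
    · rw [Ld_add_mul]; exact hm'
  have : Wm H H2 n ≤ Qd H n - 1 - m0 := by
    apply Wm_min'
    have e : Qd H n - 1 - (Qd H n - 1 - m0) = m0 := by omega
    rw [e]; exact hm0
  omega

/-- the arithmetic selection pattern -/
def SelP (L v : ℕ) (a : Prop) : Prop :=
  if L = 1 then a
  else if L = 2 then a ∧ v = 1
  else ((a ∧ ((v % 3 = 0 ∧ ¬(L % 3 = 2 ∧ v = L - 2)) ∨ v = L - 1 ∨ (L % 3 = 2 ∧ v = L - 3)))
   ∨ (¬a ∧ ((v % 3 = 0 ∧ v ≠ L - 1) ∨ (L % 3 = 1 ∧ v = L - 2))))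

/-- the selected arcs (the directed matching) -/
def seld (n : ℕ) : Prop := SelP (Ld H n) (vd H n) (aS H H2 n)

omit H2 in
lemma Qd_add_r (n : ℕ) : Qd H (n + r) = Qd H n + r := by
  have := ud_lt H n
  unfold Qd
  rw [ud_add_r]
  omega

lemma Wm_add_r (n : ℕ) : Wm H H2 (n + r) = Wm H H2 n := by
  have hQ := Qd_ge H n
  have h1 := Wm_lt H H2 n
  have h2 := Wm_lt H H2 (n + r)
  apply le_antisymm
  · apply Wm_min'
    have e : Qd H (n + r) - 1 - Wm H H2 n = (Qd H n - 1 - Wm H H2 n) + r := by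
      rw [Qd_add_r]; omega
    rw [e, Ld_add_r]
    exact Wm_spec H H2 n
  · apply Wm_min'
    have := Wm_spec H H2 (n + r)
    have e : Qd H (n + r) - 1 - Wm H H2 (n + r) = (Qd H n - 1 - Wm H H2 (n+r)) + r := by
      rw [Qd_add_r]; omega
    rw [e, Ld_add_r] at this
    exact this

lemma based_add_r (n : ℕ) : based H H2 (n + r) = based H H2 n := by
  have hQ := Qd_ge H n
  have h2 := Wm_lt H H2 n
  unfold based
  rw [Wm_add_r, Qd_add_r]
  have e : Qd H n + r - 1 - Wm H H2 n = (Qd H n - 1 - Wm H H2 n) + r := by omega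
  rw [e, Ld_add_r]

lemma aS_add_r (n : ℕ) : aS H H2 (n + r) ↔ aS H H2 n := by
  unfold aS
  rw [based_add_r, Wm_add_r]

omit H H2 in
lemma SelP_congr {L v : ℕ} {a b : Prop} (h : a ↔ b) : SelP L v a ↔ SelP L v b := by
  unfold SelP
  split_ifs <;> tauto

lemma seld_add_r (n : ℕ) : seld H H2 (n + r) ↔ seld H H2 n := by
  unfold seld
  rw [Ld_add_r, vd_add_r]
  exact SelP_congr (aS_add_r H H2 n)

lemma seld_mod (n : ℕ) : seld H H2 n ↔ seld H H2 (n % r) := by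
  have hr1 : 1 ≤ r := Nat.one_le_iff_ne_zero.mpr (NeZero.ne r)
  induction n using Nat.strong_induction_on with
  | _ n ih =>
    by_cases h : n < r
    · rw [Nat.mod_eq_of_lt h]
    · push_neg at h
      have h1 := seld_add_r H H2 (n - r)
      have e2 : n - r + r = n := by omega
      rw [e2] at h1
      rw [Nat.mod_eq_sub_mod h]
      exact h1.trans (ih (n - r) (by omega))

-- transitions within a block
omit H2 in
lemma vd_succ_of_not_chg {n : ℕ} (h : ¬ chg r o n) : vd H n = vd H (n + 1) + 1 := by
  have h0 : vd H n ≠ 0 := by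
    intro h0
    exact h ((chg_iff_vd_eq_zero H n).mpr h0)
  have hs := vd_spec H n
  have h1 : vd H (n + 1) ≤ vd H n - 1 := by
    apply vd_min'
    have e : n + 1 + (vd H n - 1) = n + vd H n := by omega
    rw [e]; exact hs
  have h2 : vd H n ≤ vd H (n + 1) + 1 := by
    apply vd_min'
    have e : n + (vd H (n + 1) + 1) = (n + 1) + vd H (n+1) := by ring
    rw [e]; exact vd_spec H (n + 1)
  omega

omit H2 in
lemma ud_succ_of_not_chg {n : ℕ} (h : ¬ chg r o n) : ud H (n + 1) = ud H n + 1 := by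
  have hu := ud_lt H n
  conv_lhs => unfold ud
  rw [Nat.find_eq_iff]
  constructor
  · have e : n + 1 + r - 1 - (ud H n + 1) = n + r - 1 - ud H n := by omega
    rw [e]; exact ud_spec H n
  · intro t ht
    match t with
    | 0 =>
      have e : n + 1 + r - 1 - 0 = n + r := by omega
      rw [e, chg_add_r]
      exact h
    | (s+1) =>
      have e : n + 1 + r - 1 - (s + 1) = n + r - 1 - s := by omega
      rw [e]
      exact ud_min H (by omega)

omit H2 in
lemma Qd_succ_of_not_chg {n : ℕ} (h : ¬ chg r o n) : Qd H (n + 1) = Qd H n := by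
  have hu := ud_lt H n
  unfold Qd
  rw [ud_succ_of_not_chg H h]
  omega

omit H2 in
lemma Ld_succ_of_not_chg {n : ℕ} (h : ¬ chg r o n) : Ld H (n + 1) = Ld H n := by
  unfold Ld
  rw [ud_succ_of_not_chg H h, vd_succ_of_not_chg H h]
  ring

lemma Wm_succ_of_not_chg {n : ℕ} (h : ¬ chg r o n) : Wm H H2 (n + 1) = Wm H H2 n := by
  apply le_antisymm
  · apply Wm_min'
    rw [Qd_succ_of_not_chg H h]
    exact Wm_spec H H2 n
  · apply Wm_min'
    have := Wm_spec H H2 (n + 1)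
    rw [Qd_succ_of_not_chg H h] at this
    exact this

lemma aS_succ_of_not_chg {n : ℕ} (h : ¬ chg r o n) : aS H H2 (n + 1) ↔ aS H H2 n := by
  unfold aS based
  rw [Wm_succ_of_not_chg H H2 h, Qd_succ_of_not_chg H h]

-- transitions across a block boundary
omit H2 in
lemma ud_succ_of_chg {n : ℕ} (h : chg r o n) : ud H (n + 1) = 0 := by
  show Nat.find (exists_chg_window H (n+1)) = 0
  rw [Nat.find_eq_iff]
  refine ⟨?_, by omega⟩
  have hr1 : 1 ≤ r := Nat.one_le_iff_ne_zero.mpr (NeZero.ne r)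
  have e : n + 1 + r - 1 - 0 = n + r := by omega
  rw [e, chg_add_r]
  exact h

omit H2 in
lemma Qd_succ_of_chg {n : ℕ} (h : chg r o n) : Qd H (n + 1) = n + 1 + 2 * r := by
  unfold Qd
  rw [ud_succ_of_chg H h]
  omega

omit H2 in
lemma Ld_add_two_mul (n : ℕ) : Ld H (n + 2 * r) = Ld H n := by
  rw [show n + 2*r = (n + r) + r by ring, Ld_add_r, Ld_add_r]

lemma Wm_succ_of_chg_long {n : ℕ} (h : chg r o n) (hL : 2 ≤ Ld H n) :
    Wm H H2 (n + 1) = 0 := by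
  show Nat.find (exists_L2_window H H2 (n+1)) = 0
  rw [Nat.find_eq_iff]
  refine ⟨?_, by omega⟩
  rw [Qd_succ_of_chg H h]
  have e : n + 1 + 2 * r - 1 - 0 = n + 2 * r := by omega
  rw [e, Ld_add_two_mul]
  exact hL

lemma based_succ_of_chg_long {n : ℕ} (h : chg r o n) (hL : 2 ≤ Ld H n) :
    based H H2 (n + 1) = Ld H n := by
  unfold based
  rw [Wm_succ_of_chg_long H H2 h hL, Qd_succ_of_chg H h]
  have e : n + 1 + 2 * r - 1 - 0 = n + 2 * r := by omega
  rw [e, Ld_add_two_mul]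

lemma aS_succ_of_chg_long {n : ℕ} (h : chg r o n) (hL : 2 ≤ Ld H n) :
    (aS H H2 (n + 1) ↔ Ld H n = 2) := by
  unfold aS
  rw [based_succ_of_chg_long H H2 h hL, Wm_succ_of_chg_long H H2 h hL]
  simp

omit H2 in
lemma ud_eq_zero_of_L1 {n : ℕ} (hL : Ld H n = 1) : ud H n = 0 := by
  unfold Ld at hL; omega

lemma Wm_succ_of_chg_short {n : ℕ} (h : chg r o n) (hL : Ld H n = 1) :
    Wm H H2 (n + 1) = Wm H H2 n + 1 := by
  have hu : ud H n = 0 := ud_eq_zero_of_L1 H hL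
  have hQn : Qd H n = n + 2 * r := by unfold Qd; omega
  conv_lhs => unfold Wm
  rw [Nat.find_eq_iff]
  constructor
  · rw [Qd_succ_of_chg H h]
    have e : n + 1 + 2 * r - 1 - (Wm H H2 n + 1) = Qd H n - 1 - Wm H H2 n := by
      rw [hQn]; omega
    rw [e]
    exact Wm_spec H H2 n
  · intro t ht
    match t with
    | 0 =>
      rw [Qd_succ_of_chg H h]
      have e : n + 1 + 2 * r - 1 - 0 = n + 2 * r := by omega
      rw [e, Ld_add_two_mul, hL]
      omega
    | (s+1) =>
      rw [Qd_succ_of_chg H h]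
      have e : n + 1 + 2 * r - 1 - (s+1) = Qd H n - 1 - s := by rw [hQn]; omega
      rw [e]
      exact Wm_min H H2 (by omega)

lemma based_succ_of_chg_short {n : ℕ} (h : chg r o n) (hL : Ld H n = 1) :
    based H H2 (n + 1) = based H H2 n := by
  have hu : ud H n = 0 := ud_eq_zero_of_L1 H hL
  have hQn : Qd H n = n + 2 * r := by unfold Qd; omega
  unfold based
  rw [Wm_succ_of_chg_short H H2 h hL, Qd_succ_of_chg H h]
  congr 1
  rw [hQn]; omega

lemma aS_succ_of_chg_short {n : ℕ} (h : chg r o n) (hL : Ld H n = 1) :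
    (aS H H2 (n + 1) ↔ ¬ aS H H2 n) := by
  unfold aS
  rw [based_succ_of_chg_short H H2 h hL, Wm_succ_of_chg_short H H2 h hL]
  have hpar : ((Wm H H2 n + 1) % 2 = 0) ↔ ¬(Wm H H2 n % 2 = 0) := by omega
  rw [hpar]
  tauto

omit H H2 in
lemma SelP_first {v : ℕ} {a : Prop} : SelP (v + 1) v a ↔ a := by
  unfold SelP
  by_cases ha : a <;> split_ifs <;> simp [ha] <;> try omega

omit H H2 in
lemma SelP_last {L : ℕ} {a : Prop} (hL : 1 ≤ L) : SelP L 0 a ↔ (3 ≤ L ∨ (L = 1 ∧ a)) := by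
  unfold SelP
  by_cases ha : a <;> split_ifs <;> simp [ha] <;> try omega

omit H H2 in
lemma SelP_noSS {L v : ℕ} {a : Prop} (h1 : SelP L (v + 1) a) (h2 : SelP L v a)
    (hvL : v + 1 ≤ L - 1) : False := by
  unfold SelP at h1 h2
  by_cases ha : a <;> split_ifs at h1 h2 <;> simp [ha] at h1 h2 <;> try omega

omit H H2 in
lemma SelP_tri {L v : ℕ} {a : Prop} (hvL : v + 2 ≤ L - 1) :
    SelP L (v + 2) a ∨ SelP L (v + 1) a ∨ SelP L v a := by
  unfold SelP
  by_cases ha : a <;> split_ifs <;> simp [ha] <;> try omega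

omit H2 in
lemma vd_le (n : ℕ) : vd H n + 1 ≤ Ld H n := by unfold Ld; omega

omit H2 in
lemma Ld_pos (n : ℕ) : 1 ≤ Ld H n := by unfold Ld; omega

lemma seld_iff (n : ℕ) : seld H H2 n ↔ SelP (Ld H n) (vd H n) (aS H H2 n) := Iff.rfl

lemma seld_first {n : ℕ} (h : ud H n = 0) : seld H H2 n ↔ aS H H2 n := by
  rw [seld_iff]
  have e : Ld H n = vd H n + 1 := by unfold Ld; omega
  rw [e]
  exact SelP_first

lemma seld_last {n : ℕ} (h : chg r o n) :
    seld H H2 n ↔ (3 ≤ Ld H n ∨ (Ld H n = 1 ∧ aS H H2 n)) := by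
  have hv : vd H n = 0 := (chg_iff_vd_eq_zero H n).mp h
  rw [seld_iff, hv]
  exact SelP_last (Ld_pos H n)

lemma noSS (n : ℕ) : ¬ (seld H H2 n ∧ seld H H2 (n + 1)) := by
  rintro ⟨h1, h2⟩
  by_cases hc : chg r o n
  · rw [seld_last H H2 hc] at h1
    rw [seld_first H H2 (ud_succ_of_chg H hc)] at h2
    rcases h1 with h3 | ⟨h3, h4⟩
    · have := (aS_succ_of_chg_long H H2 hc (by omega)).mp h2
      omega
    · exact (aS_succ_of_chg_short H H2 hc h3).mp h2 h4
  · have hL := Ld_succ_of_not_chg H hc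
    have hv := vd_succ_of_not_chg H hc
    have ha := aS_succ_of_not_chg H H2 hc
    rw [seld_iff] at h1 h2
    rw [hL] at h2
    have h2' : SelP (Ld H n) (vd H (n + 1)) (aS H H2 n) := (SelP_congr ha).mp h2
    have h1' : SelP (Ld H n) (vd H (n + 1) + 1) (aS H H2 n) := by rw [← hv]; exact h1
    exact SelP_noSS h1' h2' (by have := vd_le H n; omega)

lemma chg_cover {n : ℕ} (hc : chg r o n) : seld H H2 n ∨ seld H H2 (n + 1) := by
  have hL1 := Ld_pos H n
  by_cases h3 : 3 ≤ Ld H n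
  · left; rw [seld_last H H2 hc]; left; exact h3
  · by_cases h2 : Ld H n = 2
    · right
      rw [seld_first H H2 (ud_succ_of_chg H hc)]
      exact (aS_succ_of_chg_long H H2 hc (by omega)).mpr h2
    · have hL : Ld H n = 1 := by omega
      by_cases ha : aS H H2 n
      · left; rw [seld_last H H2 hc]; right; exact ⟨hL, ha⟩
      · right
        rw [seld_first H H2 (ud_succ_of_chg H hc)]
        exact (aS_succ_of_chg_short H H2 hc hL).mpr ha

lemma tri_cover {n : ℕ} (h1 : ¬ chg r o n) (h2 : ¬ chg r o (n + 1)) :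
    seld H H2 n ∨ seld H H2 (n + 1) ∨ seld H H2 (n + 2) := by
  have hL1 := Ld_succ_of_not_chg H h1
  have hL2 := Ld_succ_of_not_chg H h2
  have hv1 := vd_succ_of_not_chg H h1
  have hv2 := vd_succ_of_not_chg H h2
  have ha1 := aS_succ_of_not_chg H H2 h1
  have ha2 := aS_succ_of_not_chg H H2 h2
  have hle := vd_le H n
  rw [seld_iff, seld_iff, seld_iff]
  rw [show n + 2 = n + 1 + 1 by ring, hL2, hL1]
  rw [show n + 2 = n + 1 + 1 by ring] at hv2 ha2
  have e1 : vd H n = vd H (n + 1 + 1) + 2 := by omega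
  have := SelP_tri (L := Ld H n) (v := vd H (n+1+1)) (a := aS H H2 n) (by omega)
  rcases this with h | h | h
  · left; rw [← e1] at h; exact h
  · right; left
    apply (SelP_congr ha1).mpr
    rw [show vd H (n+1) = vd H (n+1+1) + 1 by omega]
    exact h
  · right; right
    apply (SelP_congr (ha2.trans ha1)).mpr
    exact h

omit H H2

lemma walk_of_transGen {V : Type*} {R : V → V → Prop} {x y : V} (h : Relation.TransGen R x y) :
    ∃ (k : ℕ) (w : ℕ → V), 0 < k ∧ w 0 = x ∧ w k = y ∧ ∀ i < k, R (w i) (w (i + 1)) := by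
  induction h with
  | single hxy =>
    rename_i b
    refine ⟨1, fun n => if n = 0 then x else b, one_pos, by simp, by simp, ?_⟩
    intro i hi
    interval_cases i
    simpa using hxy
  | tail hxb hbc ih =>
    rename_i b c
    obtain ⟨k, w, hk, h0, hke, hstep⟩ := ih
    refine ⟨k + 1, fun n => if n ≤ k then w n else c, by omega, ?_, ?_, ?_⟩
    · simp [h0]
    · simp
    · intro i hi
      by_cases hik : i < k
      · have e1 : i ≤ k := by omega
        have e2 : i + 1 ≤ k := by omega
        simp only [e1, e2, if_pos]
        exact hstep i hik
      · have e : i = k := by omega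
        subst e
        simp only [le_refl, if_pos, if_neg (by omega : ¬ i + 1 ≤ i)]
        rw [hke]
        exact hbc

lemma hasWalk_of_transGen_self {V : Type*} {F : Finset (V × V)} {v : V}
    (h : Relation.TransGen (fun u w => (u, w) ∈ F) v v) (n : ℕ) : HasWalkOfLength F n := by
  obtain ⟨k, w, hk, h0, hke, hstep⟩ := walk_of_transGen h
  refine ⟨fun m => w (m % k), ?_⟩
  intro i _
  have hlt : i % k < k := Nat.mod_lt _ hk
  show (w (i % k), w ((i + 1) % k)) ∈ F
  have hdiv := Nat.div_add_mod i k
  by_cases hnext : i % k + 1 = k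
  · have h4 : k * (i / k + 1) = k * (i / k) + k := by ring
    have h3 : i + 1 = 0 + k * (i / k + 1) := by omega
    have e : (i + 1) % k = 0 := by
      rw [h3, Nat.add_mul_mod_self_left]
      simp
    rw [e]
    have := hstep (i % k) hlt
    rwa [hnext, hke, ← h0] at this
  · have h3 : i + 1 = (i % k + 1) + k * (i / k) := by omega
    have e : (i + 1) % k = i % k + 1 := by
      rw [h3, Nat.add_mul_mod_self_left]
      exact Nat.mod_eq_of_lt (by omega)
    rw [e]
    exact hstep (i % k) hlt

end Stmt3Aux

/-- An orientation of a cycle of odd length that is not a directed cycle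
(not all edges consistently oriented) admits a decomposition into a 2-bounded directed
linear forest and a directed matching. -/
theorem stmt3 (r : ℕ) [NeZero r] (hr : 3 ≤ r) (hodd : Odd r) (o : Fin r → Bool)
    (hnotdir : ¬ ∀ i j : Fin r, o i = o j)
    (C : Finset (Fin r × Fin r))
    (hC : C = Finset.image (fun i => if o i then (i, i + 1) else (i + 1, i)) Finset.univ) :
    ∃ F2 F1 : Finset (Fin r × Fin r),
      F2 ∪ F1 = C ∧ Disjoint F2 F1 ∧ IsBoundedDLF F2 2 ∧ IsDirectedMatching F1 := by
  classical
  -- existence of a change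
  have H : ∃ m, Stmt3Aux.chg r o m := by
    by_contra hno
    push_neg at hno
    apply hnotdir
    have hstep : ∀ n, Stmt3Aux.bb r o n = Stmt3Aux.bb r o (n + 1) := by
      intro n
      have := hno n
      unfold Stmt3Aux.chg at this
      simpa using this
    have hconst : ∀ n, Stmt3Aux.bb r o n = Stmt3Aux.bb r o 0 := by
      intro n
      induction n with
      | zero => rfl
      | succ n ih => rw [← hstep n]; exact ih
    intro i j
    have hi : o i = Stmt3Aux.bb r o i.val := by
      unfold Stmt3Aux.bb; rw [Fin.cast_val_eq_self]
    have hj : o j = Stmt3Aux.bb r o j.val := by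
      unfold Stmt3Aux.bb; rw [Fin.cast_val_eq_self]
    rw [hi, hj, hconst, hconst j.val]
  -- existence of a long block (uses oddness)
  have H2 : ∃ m, 2 ≤ Stmt3Aux.Ld H m := by
    by_contra hno
    push_neg at hno
    have hall : ∀ n, Stmt3Aux.chg r o n := by
      intro n
      have h1 := hno n
      unfold Stmt3Aux.Ld at h1
      have hv : Stmt3Aux.vd H n = 0 := by omega
      exact (Stmt3Aux.chg_iff_vd_eq_zero H n).mpr hv
    have halt : ∀ n, Stmt3Aux.bb r o (n + 1) = ! Stmt3Aux.bb r o n := by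
      intro n
      have := hall n
      unfold Stmt3Aux.chg at this
      rcases Bool.eq_false_or_eq_true (Stmt3Aux.bb r o n) with h | h <;>
        rcases Bool.eq_false_or_eq_true (Stmt3Aux.bb r o (n+1)) with h2 | h2 <;>
        simp [h, h2] at this ⊢
    have hpat : ∀ n, Stmt3Aux.bb r o n = (if Even n then Stmt3Aux.bb r o 0 else ! Stmt3Aux.bb r o 0) := by
      intro n
      induction n with
      | zero => simp
      | succ n ih =>
        rw [halt n, ih]
        by_cases he : Even n
        · simp [he, Nat.even_add_one]
        · simp [he, Nat.even_add_one]
    have h1 : Stmt3Aux.bb r o r = Stmt3Aux.bb r o 0 := by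
      have := Stmt3Aux.bb_add_r (o := o) 0
      simpa using this
    have h2 := hpat r
    rw [if_neg (Nat.not_even_iff_odd.mpr hodd)] at h2
    rw [h1] at h2
    simp at h2
  -- bridging to Fin r
  set A : Fin r → Fin r × Fin r := fun i => if o i then (i, i + 1) else (i + 1, i) with hA
  set selp : Fin r → Prop := fun i => Stmt3Aux.seld H H2 i.val with hselpdef
  have hcastval : ∀ n : ℕ, n < r → ((n : Fin r)).val = n := by
    intro n hn
    rw [Fin.val_natCast]
    exact Nat.mod_eq_of_lt hn
  have hself : ∀ i : Fin r, ((i.val : ℕ) : Fin r) = i := fun i => Fin.cast_val_eq_self i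
  have hsucc : ∀ i : Fin r, ((i.val + 1 : ℕ) : Fin r) = i + 1 := by
    intro i
    push_cast
    rfl
  have hsucc2 : ∀ i : Fin r, ((i.val + 2 : ℕ) : Fin r) = i + 1 + 1 := by
    intro i
    push_cast
    rw [add_assoc, one_add_one_eq_two]
  have hbb : ∀ i : Fin r, Stmt3Aux.bb r o i.val = o i := by
    intro i
    unfold Stmt3Aux.bb
    rw [hself]
  have hchg_iff : ∀ i : Fin r, (Stmt3Aux.chg r o i.val ↔ ¬ o i = o (i + 1)) := by
    intro i
    unfold Stmt3Aux.chg Stmt3Aux.bb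
    rw [hself, hsucc]
  have hchg2_iff : ∀ i : Fin r, (Stmt3Aux.chg r o (i.val + 1) ↔ ¬ o (i + 1) = o (i + 1 + 1)) := by
    intro i
    unfold Stmt3Aux.chg Stmt3Aux.bb
    rw [show i.val + 1 + 1 = i.val + 2 by ring, hsucc, hsucc2]
  have hselpnat : ∀ n : ℕ, selp ((n : Fin r)) ↔ Stmt3Aux.seld H H2 n := by
    intro n
    rw [hselpdef]
    show Stmt3Aux.seld H H2 ((n : Fin r)).val ↔ _
    rw [Fin.val_natCast]
    exact (Stmt3Aux.seld_mod H H2 n).symm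
  have hselp1 : ∀ i : Fin r, selp (i + 1) ↔ Stmt3Aux.seld H H2 (i.val + 1) := by
    intro i
    rw [← hsucc i]
    exact hselpnat _
  have hselp2 : ∀ i : Fin r, selp (i + 1 + 1) ↔ Stmt3Aux.seld H H2 (i.val + 2) := by
    intro i
    rw [← hsucc2 i]
    exact hselpnat _
  -- Fin-level combinatorial facts
  have hnoSS : ∀ i : Fin r, ¬ (selp i ∧ selp (i + 1)) := by
    rintro i ⟨p, q⟩
    exact Stmt3Aux.noSS H H2 i.val ⟨p, (hselp1 i).mp q⟩
  have hcover : ∀ i : Fin r, o i ≠ o (i + 1) → selp i ∨ selp (i + 1) := by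
    intro i hne
    rcases Stmt3Aux.chg_cover H H2 ((hchg_iff i).mpr hne) with h | h
    · exact Or.inl h
    · exact Or.inr ((hselp1 i).mpr h)
  have htri : ∀ i : Fin r, o i = o (i + 1) → o (i + 1) = o (i + 1 + 1) →
      selp i ∨ selp (i + 1) ∨ selp (i + 1 + 1) := by
    intro i h1 h2
    have hc1 : ¬ Stmt3Aux.chg r o i.val := fun hc => (hchg_iff i).mp hc h1
    have hc2 : ¬ Stmt3Aux.chg r o (i.val + 1) := fun hc => (hchg2_iff i).mp hc h2
    rcases Stmt3Aux.tri_cover H H2 hc1 hc2 with h | h | h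
    · exact Or.inl h
    · exact Or.inr (Or.inl ((hselp1 i).mpr h))
    · exact Or.inr (Or.inr ((hselp2 i).mpr h))
  -- Fin arithmetic
  have hne1 : ∀ i : Fin r, i ≠ i + 1 := by
    intro i hi
    have h0 : (0 : Fin r) = 1 := by
      have := add_left_cancel (a := i) (b := (0 : Fin r)) (c := (1 : Fin r)) (by simpa using hi)
      exact this
    have h1 : ((0 : ℕ) : Fin r) = ((1 : ℕ) : Fin r) := by push_cast; exact h0
    have := congrArg Fin.val h1
    rw [hcastval 0 (by omega), hcastval 1 (by omega)] at this
    omega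
  have hne2 : ∀ i : Fin r, i + 1 + 1 ≠ i := by
    intro i hi
    have h3 : i + ((2 : ℕ) : Fin r) = i + ((0 : ℕ) : Fin r) := by
      push_cast
      rw [show ((2 : Fin r)) = 1 + 1 from (one_add_one_eq_two).symm, ← add_assoc, add_zero]
      exact hi
    have h0 : ((2 : ℕ) : Fin r) = ((0 : ℕ) : Fin r) := add_left_cancel h3
    have := congrArg Fin.val h0
    rw [hcastval 2 (by omega), hcastval 0 (by omega)] at this
    omega
  have haddc : ∀ i j : Fin r, i + 1 = j + 1 → i = j := by
    intro i j h
    exact add_right_cancel h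
  -- arc map facts
  have hheadeq : ∀ (i : Fin r) (x y : Fin r), A i = (x, y) →
      (o i = true ∧ x = i ∧ y = i + 1) ∨ (o i = false ∧ x = i + 1 ∧ y = i) := by
    intro i x y h
    rw [hA] at h
    simp only at h
    cases hoi : o i with
    | false =>
      rw [hoi, if_neg (by simp)] at h
      rw [Prod.mk.injEq] at h
      exact Or.inr ⟨rfl, h.1.symm, h.2.symm⟩
    | true =>
      rw [hoi, if_pos rfl] at h
      rw [Prod.mk.injEq] at h
      exact Or.inl ⟨rfl, h.1.symm, h.2.symm⟩
  have hAinj : ∀ i j : Fin r, A i = A j → i = j := by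
    intro i j h
    rcases hheadeq i (A j).1 (A j).2 (by rw [h]) with ⟨h1, h2, h3⟩ | ⟨h1, h2, h3⟩ <;>
      rcases hheadeq j (A j).1 (A j).2 rfl with ⟨g1, g2, g3⟩ | ⟨g1, g2, g3⟩
    · exact h2.symm.trans g2
    · exfalso
      have e1 : i = j + 1 := h2.symm.trans g2
      have e2 : i + 1 = j := h3.symm.trans g3
      rw [← e2] at e1
      exact hne2 i e1.symm
    · exfalso
      have e1 : i + 1 = j := h2.symm.trans g2
      have e2 : i = j + 1 := h3.symm.trans g3
      rw [← e1] at e2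
      exact hne2 i e2.symm
    · exact h3.symm.trans g3
  have hchain : ∀ (i j : Fin r) (x y z : Fin r), A i = (x, y) → A j = (y, z) →
      (o i = true ∧ o j = true ∧ j = i + 1) ∨ (o i = false ∧ o j = false ∧ i = j + 1) := by
    intro i j x y z hi hj
    rcases hheadeq i x y hi with ⟨h1, h2, h3⟩ | ⟨h1, h2, h3⟩ <;>
      rcases hheadeq j y z hj with ⟨g1, g2, g3⟩ | ⟨g1, g2, g3⟩
    · exact Or.inl ⟨h1, g1, g2.symm.trans h3⟩
    · exfalso
      have e : j + 1 = i + 1 := g2.symm.trans h3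
      have e2 := haddc _ _ e
      rw [e2] at g1
      rw [g1] at h1
      simp at h1
    · exfalso
      have e : j = i := g2.symm.trans h3
      rw [e] at g1
      rw [g1] at h1
      simp at h1
    · exact Or.inr ⟨h1, g1, h3.symm.trans g2⟩
  refine ⟨(Finset.univ.filter fun i => ¬ selp i).image A,
          (Finset.univ.filter fun i => selp i).image A, ?_, ?_, ?_, ?_⟩
  · -- union
    rw [hC, ← Finset.image_union]
    congr 1
    ext i
    simp only [Finset.mem_union, Finset.mem_filter, Finset.mem_univ, true_and]
    constructor
    · intro; trivial
    · intro
      exact (em (selp i)).symm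
  · -- disjoint
    rw [Finset.disjoint_left]
    rintro a ha hb
    rw [Finset.mem_image] at ha hb
    obtain ⟨i, hi, hAi⟩ := ha
    obtain ⟨j, hj, hAj⟩ := hb
    rw [Finset.mem_filter] at hi hj
    have : i = j := hAinj i j (by rw [hAi, hAj])
    rw [this] at hi
    exact hi.2 hj.2
  · -- 2-bounded DLF
    have hmem : ∀ a, a ∈ (Finset.univ.filter fun i => ¬ selp i).image A ↔
        ∃ i, ¬ selp i ∧ A i = a := by
      intro a
      simp [Finset.mem_image]
    have hnowalk : ¬ HasWalkOfLength ((Finset.univ.filter fun i => ¬ selp i).image A) 3 := by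
      rintro ⟨w, hw⟩
      obtain ⟨i0, hs0, hA0⟩ := (hmem _).mp (hw 0 (by norm_num))
      obtain ⟨i1, hs1, hA1⟩ := (hmem _).mp (hw 1 (by norm_num))
      obtain ⟨i2, hs2, hA2⟩ := (hmem _).mp (hw 2 (by norm_num))
      rcases hchain i0 i1 _ _ _ hA0 hA1 with ⟨p0, p1, e1⟩ | ⟨p0, p1, e1⟩ <;>
        rcases hchain i1 i2 _ _ _ hA1 hA2 with ⟨q1, q2, e2⟩ | ⟨q1, q2, e2⟩
      · have ho1 : o (i0 + 1) = true := by rw [← e1]; exact p1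
        have ho2 : o (i0 + 1 + 1) = true := by rw [← e1, ← e2]; exact q2
        rcases htri i0 (by rw [p0, ho1]) (by rw [ho1, ho2]) with h | h | h
        · exact hs0 h
        · rw [← e1] at h; exact hs1 h
        · rw [← e1, ← e2] at h; exact hs2 h
      · rw [p1] at q1; simp at q1
      · rw [p1] at q1; simp at q1
      · have ho1 : o (i2 + 1) = false := by rw [← e2]; exact p1
        have ho2 : o (i2 + 1 + 1) = false := by rw [← e2, ← e1]; exact p0
        rcases htri i2 (by rw [q2, ho1]) (by rw [ho1, ho2]) with h | h | h
        · exact hs2 h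
        · rw [← e2] at h; exact hs1 h
        · rw [← e2, ← e1] at h; exact hs0 h
    refine ⟨⟨?_, ?_, ?_⟩, hnowalk⟩
    · -- in-degrees
      intro w
      unfold inDeg
      apply Finset.card_le_one.mpr
      intro a ha b hb
      rw [Finset.mem_filter] at ha hb
      obtain ⟨i, hsi, hAi⟩ := (hmem a).mp ha.1
      obtain ⟨j, hsj, hAj⟩ := (hmem b).mp hb.1
      suffices hij : i = j by rw [← hAi, ← hAj, hij]
      rcases hheadeq i a.1 a.2 (by rw [hAi]) with ⟨h1, h2, h3⟩ | ⟨h1, h2, h3⟩ <;>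
        rcases hheadeq j b.1 b.2 (by rw [hAj]) with ⟨g1, g2, g3⟩ | ⟨g1, g2, g3⟩
      · -- both true: w = i+1 = j+1
        apply haddc
        rw [← h3, ← g3, ha.2, hb.2]
      · -- o i true, o j false : j = i + 1, change at i
        exfalso
        have hji : j = i + 1 := by rw [← g3, hb.2, ← ha.2, h3]
        have ho1 : o (i + 1) = false := by rw [← hji]; exact g1
        have hcne : o i ≠ o (i + 1) := by rw [h1, ho1]; simp
        rcases hcover i hcne with h | h
        · exact hsi h
        · exact hsj (by rw [hji]; exact h)
      · -- o i false, o j true : i = j + 1, change at j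
        exfalso
        have hij : i = j + 1 := by rw [← h3, ha.2, ← hb.2, g3]
        have ho1 : o (j + 1) = false := by rw [← hij]; exact h1
        have hcne : o j ≠ o (j + 1) := by rw [g1, ho1]; simp
        rcases hcover j hcne with h | h
        · exact hsj h
        · exact hsi (by rw [hij]; exact h)
      · rw [← h3, ← g3, ha.2, hb.2]
    · -- out-degrees
      intro w
      unfold outDeg
      apply Finset.card_le_one.mpr
      intro a ha b hb
      rw [Finset.mem_filter] at ha hb
      obtain ⟨i, hsi, hAi⟩ := (hmem a).mp ha.1
      obtain ⟨j, hsj, hAj⟩ := (hmem b).mp hb.1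
      suffices hij : i = j by rw [← hAi, ← hAj, hij]
      rcases hheadeq i a.1 a.2 (by rw [hAi]) with ⟨h1, h2, h3⟩ | ⟨h1, h2, h3⟩ <;>
        rcases hheadeq j b.1 b.2 (by rw [hAj]) with ⟨g1, g2, g3⟩ | ⟨g1, g2, g3⟩
      · rw [← h2, ← g2, ha.2, hb.2]
      · -- o i true, o j false : i = j + 1, change at j
        exfalso
        have hij : i = j + 1 := by rw [← h2, ha.2, ← hb.2, g2]
        have ho1 : o (j + 1) = true := by rw [← hij]; exact h1
        have hcne : o j ≠ o (j + 1) := by rw [g1, ho1]; simp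
        rcases hcover j hcne with h | h
        · exact hsj h
        · exact hsi (by rw [hij]; exact h)
      · -- o i false, o j true : j = i + 1, change at i
        exfalso
        have hji : j = i + 1 := by rw [← g2, hb.2, ← ha.2, h2]
        have ho1 : o (i + 1) = true := by rw [← hji]; exact g1
        have hcne : o i ≠ o (i + 1) := by rw [h1, ho1]; simp
        rcases hcover i hcne with h | h
        · exact hsi h
        · exact hsj (by rw [hji]; exact h)
      · apply haddc
        rw [← h2, ← g2, ha.2, hb.2]
    · intro v hv
      exact hnowalk (Stmt3Aux.hasWalk_of_transGen_self hv 3)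
  · -- directed matching
    intro w
    have hmem1 : ∀ a, a ∈ (Finset.univ.filter fun i => selp i).image A ↔
        ∃ i, selp i ∧ A i = a := by
      intro a
      simp [Finset.mem_image]
    have hinc : ∀ (i : Fin r) (a : Fin r × Fin r), A i = a → (a.2 = w ∨ a.1 = w) →
        w = i ∨ w = i + 1 := by
      intro i a hAi hq
      rcases hheadeq i a.1 a.2 (by rw [hAi]) with ⟨h1, h2, h3⟩ | ⟨h1, h2, h3⟩ <;>
        rcases hq with hq | hq
      · right; rw [← hq, h3]
      · left; rw [← hq, h2]
      · left; rw [← hq, h3]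
      · right; rw [← hq, h2]
    have hdisjf : Disjoint
        (((Finset.univ.filter fun i => selp i).image A).filter (fun a => a.2 = w))
        (((Finset.univ.filter fun i => selp i).image A).filter (fun a => a.1 = w)) := by
      rw [Finset.disjoint_left]
      rintro a ha hb
      rw [Finset.mem_filter] at ha hb
      obtain ⟨i, _, hAi⟩ := (hmem1 a).mp ha.1
      rcases hheadeq i a.1 a.2 (by rw [hAi]) with ⟨h1, h2, h3⟩ | ⟨h1, h2, h3⟩
      · exact hne1 i ((h2.symm.trans hb.2).trans (ha.2.symm.trans h3))
      · exact hne1 i ((h3.symm.trans ha.2).trans (hb.2.symm.trans h2))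
    unfold inDeg outDeg
    rw [← Finset.card_union_of_disjoint hdisjf]
    apply Finset.card_le_one.mpr
    intro a ha b hb
    rw [Finset.mem_union, Finset.mem_filter, Finset.mem_filter] at ha hb
    have haF : a ∈ (Finset.univ.filter fun i => selp i).image A := by tauto
    have hbF : b ∈ (Finset.univ.filter fun i => selp i).image A := by tauto
    have hqa : a.2 = w ∨ a.1 = w := by tauto
    have hqb : b.2 = w ∨ b.1 = w := by tauto
    obtain ⟨i, hsi, hAi⟩ := (hmem1 a).mp haF
    obtain ⟨j, hsj, hAj⟩ := (hmem1 b).mp hbF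
    suffices hij : i = j by rw [← hAi, ← hAj, hij]
    rcases hinc i a hAi hqa with hi1 | hi1 <;> rcases hinc j b hAj hqb with hj1 | hj1
    · rw [← hi1, ← hj1]
    · exfalso
      have : i = j + 1 := by rw [← hi1, hj1]
      apply hnoSS j
      exact ⟨hsj, by rw [← this]; exact hsi⟩
    · exfalso
      have : j = i + 1 := by rw [← hj1, hi1]
      apply hnoSS i
      exact ⟨hsi, by rw [← this]; exact hsj⟩
    · apply haddc
      rw [← hi1, ← hj1]
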